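/- Let U be a unitary matrix indexed by (Fin N) ⊕ (Fin N) over ℂ, and let M be its upper-left N×N corner block, M i j = U (inl i) (inl j). Let ψ ∈ ℂ^N be a unit vector and set φ = (ψ, 0) ∈ ℂ^N ⊕ ℂ^N. Then (1/4)·‖φ + (−i)·(U·φ)‖² = (1 + Im⟨ψ, M·ψ⟩)/2, where ⟨·,·⟩ is the standard Hermitian inner product and ‖·‖ the ℓ² norm. (This is the success probability of the Hadamard test with an extra S† phase gate, which extracts the imaginary part of ⟨ψ, Mψ⟩.) -/

import Mathlib

/-- Hadamard test with an extra `S†` phase gate (imaginary part): for a unitary `U` on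
`ℂ^N ⊕ ℂ^N` with upper-left block `M`, a unit vector `ψ ∈ ℂ^N` and `φ = (ψ, 0)`,
`(1/4)·‖φ + (−i)·Uφ‖² = (1 + Im⟨ψ, Mψ⟩)/2`. -/
theorem hadamard_test_prob_imag {N : ℕ}
    (U : Matrix (Fin N ⊕ Fin N) (Fin N ⊕ Fin N) ℂ)
    (hU : U ∈ Matrix.unitaryGroup (Fin N ⊕ Fin N) ℂ)
    (M : Matrix (Fin N) (Fin N) ℂ) (hM : ∀ i j, M i j = U (Sum.inl i) (Sum.inl j))
    (ψ : EuclideanSpace ℂ (Fin N)) (hψ : ‖ψ‖ = 1)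
    (φ : EuclideanSpace ℂ (Fin N ⊕ Fin N))
    (hφl : ∀ i, φ (Sum.inl i) = ψ i) (hφr : ∀ i, φ (Sum.inr i) = 0) :
    (1 / 4 : ℝ) * ‖φ + (-Complex.I) • Matrix.toEuclideanLin U φ‖ ^ 2
      = (1 + (inner ℂ ψ (Matrix.toEuclideanLin M ψ) : ℂ).im) / 2 := by
  set A := Matrix.toEuclideanLin U with hA
  -- ‖φ‖ = 1
  have hinnφ : (inner ℂ φ φ : ℂ) = inner ℂ ψ ψ := by
    rw [PiLp.inner_apply, PiLp.inner_apply]; simp [Fintype.sum_sum_type, hφl, hφr]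
  have hφn : ‖φ‖ ^ 2 = 1 := by
    have := inner_self_eq_norm_sq (𝕜 := ℂ) φ
    rw [hinnφ, inner_self_eq_norm_sq (𝕜 := ℂ) ψ, hψ] at this
    rw [← this]; norm_num
  -- ‖Aφ‖ = 1
  have hUU : U.conjTranspose * U = 1 := hU.1
  have hadj : Matrix.toEuclideanLin U.conjTranspose (A φ) = φ := by
    simp [hA, Matrix.toEuclideanLin_apply, Matrix.mulVec_mulVec, hUU]
  have hinnA : (inner ℂ (A φ) (A φ) : ℂ) = inner ℂ φ φ := by
    calc (inner ℂ (A φ) (A φ) : ℂ) = inner ℂ φ (LinearMap.adjoint A (A φ)) :=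
          (LinearMap.adjoint_inner_right A φ (A φ)).symm
    _ = inner ℂ φ φ := by
          rw [hA, ← Matrix.toEuclideanLin_conjTranspose_eq_adjoint, hadj]
  have hAn : ‖A φ‖ ^ 2 = 1 := by
    have := inner_self_eq_norm_sq (𝕜 := ℂ) (A φ)
    rw [hinnA, hinnφ, inner_self_eq_norm_sq (𝕜 := ℂ) ψ, hψ] at this
    rw [← this]; norm_num
  -- cross term
  have hcross : (inner ℂ φ (A φ) : ℂ) = inner ℂ ψ (Matrix.toEuclideanLin M ψ) := by
    simp only [hA, Matrix.toEuclideanLin_apply, PiLp.inner_apply, RCLike.inner_apply,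
      Matrix.mulVec, dotProduct, Fintype.sum_sum_type]
    simp only [hφl, hφr, hM,
      mul_zero, map_zero, zero_mul, Finset.sum_const_zero, add_zero]
  -- expand the norm
  have hexp := norm_add_sq (𝕜 := ℂ) φ ((-Complex.I) • A φ)
  rw [inner_smul_right, norm_smul] at hexp
  have : (inner ℂ φ (A φ) : ℂ).im = (inner ℂ ψ (Matrix.toEuclideanLin M ψ) : ℂ).im := by
    rw [hcross]
  rw [hexp, hφn, ← this]
  simp only [RCLike.mul_re, Complex.neg_re, Complex.I_re, Complex.neg_im, Complex.I_im,
    norm_neg, Complex.norm_I]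
  rw [mul_pow, hAn]
  simp [Complex.norm_I]
  ring
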